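/- Let gcd(s,n)=1 and 1 ≤ k ≤ n-1. The polynomial a_0 x - x^{q^{sk}} ∈ F_{q^n}[x] with a_0 ≠ 0 has exactly q^k roots in F_{q^n} if and only if k divides n and N_{q^n/q^k}(a_0) = 1. -/

import Mathlib

-- gcd of q^a - 1 and q^b - 1
lemma mersenne_gcd (q : ℕ) (hq : 2 ≤ q) : ∀ a b : ℕ,
    Nat.gcd (q ^ a - 1) (q ^ b - 1) = q ^ Nat.gcd a b - 1 := by
  intro a
  induction a using Nat.strong_induction_on with
  | _ a ih =>
    intro b
    rcases Nat.eq_zero_or_pos a with rfl | ha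
    · simp
    · have hmod : (q ^ b - 1) % (q ^ a - 1) = q ^ (b % a) - 1 := by
        set R := q ^ (b % a) with hR
        set A := (q ^ a) ^ (b / a) with hA
        have h1 : q ^ b = R * A := by
          rw [hR, hA, ← pow_mul, ← pow_add, Nat.mod_add_div]
        obtain ⟨c, hc⟩ : (q ^ a - 1) ∣ A - 1 := by
          simpa using Nat.sub_dvd_pow_sub_pow (q ^ a) 1 (b / a)
        have hA1 : 1 ≤ A := Nat.one_le_pow _ _ (by positivity)
        have hR1 : 1 ≤ R := Nat.one_le_pow _ _ (by omega)
        have hRA : R * (A - 1) = R * A - R := by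
          rw [Nat.mul_sub, mul_one]
        have hkey : q ^ b - 1 = (q ^ a - 1) * (R * c) + (R - 1) := by
          have h2 : (q ^ a - 1) * (R * c) = R * ((q ^ a - 1) * c) := by ring
          rw [h2, ← hc, hRA, ← h1]
          have : R ≤ q ^ b := by rw [h1]; exact Nat.le_mul_of_pos_right _ (by omega)
          omega
        have hlt : R - 1 < q ^ a - 1 := by
          have : R < q ^ a := Nat.pow_lt_pow_right (by omega) (Nat.mod_lt _ ha)
          have h2 : 2 ≤ q ^ a := le_trans hq (Nat.le_self_pow (by omega) q)
          omega
        rw [hkey, Nat.mul_comm, Nat.add_comm, Nat.add_mul_mod_self_right,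
          Nat.mod_eq_of_lt hlt]
      rw [Nat.gcd_rec (q ^ a - 1) (q ^ b - 1), hmod,
        ih (b % a) (Nat.mod_lt _ ha) a, ← Nat.gcd_rec]

-- card of m-th roots of unity in Lˣ
lemma card_pow_eq_one_units (L : Type*) [Field L] [Fintype L] {m : ℕ}
    (hm : m ∣ Nat.card Lˣ) (hm0 : 0 < m) :
    Set.ncard {u : Lˣ | u ^ m = 1} = m := by
  classical
  have : NeZero m := ⟨hm0.ne'⟩
  obtain ⟨ζ, hζ⟩ := IsCyclic.exists_ofOrder_eq_natCard (α := Lˣ)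
  have horder : orderOf ζ = Nat.card Lˣ := hζ
  have h1 : orderOf (ζ ^ (orderOf ζ / m)) = m :=
    orderOf_pow_orderOf_div (by rw [horder, Nat.card_eq_fintype_card]; exact Fintype.card_pos.ne') (horder ▸ hm)
  have hprim : IsPrimitiveRoot (ζ ^ (orderOf ζ / m)) m := by
    simpa [h1] using IsPrimitiveRoot.orderOf (ζ ^ (orderOf ζ / m))
  have hcard : Fintype.card (rootsOfUnity m L) = m := by rw [← Nat.card_eq_fintype_card]; exact hprim.card_rootsOfUnity'
  have hset : {u : Lˣ | u ^ m = 1} = (rootsOfUnity m L : Set Lˣ) := by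
    ext u; simp [mem_rootsOfUnity]
  rw [hset]
  rw [← Nat.card_coe_set_eq, Nat.card_eq_fintype_card]
  simpa using hcard


open scoped Classical in
lemma count_pow (L : Type*) [Field L] [Fintype L] (d : ℕ) (hd : 0 < d) (a : Lˣ) :
    Set.ncard {u : Lˣ | u ^ d = a} =
      if a ^ (Nat.card Lˣ / Nat.gcd d (Nat.card Lˣ)) = 1
      then Nat.gcd d (Nat.card Lˣ) else 0 := by
  classical
  set N := Nat.card Lˣ with hN
  set g := Nat.gcd d N with hg
  have hN0 : 0 < N := Nat.card_pos
  have hgN : g ∣ N := Nat.gcd_dvd_right _ _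
  have hgd : g ∣ d := Nat.gcd_dvd_left _ _
  have hg0 : 0 < g := Nat.gcd_pos_of_pos_left _ hd
  obtain ⟨e, he⟩ := id hgd
  obtain ⟨f, hf⟩ := id hgN
  have hNg : N / g = f := by rw [hf, Nat.mul_div_cancel_left _ hg0]
  have hpowN : ∀ u : Lˣ, u ^ N = 1 := fun u => by
    rw [hN, Nat.card_eq_fintype_card]; exact pow_card_eq_one
  have hpow : ∀ u : Lˣ, (u ^ d) ^ (N / g) = 1 := by
    intro u
    rw [← pow_mul, hNg, he]
    rw [show g * e * f = N * e by rw [hf]; ring]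
    rw [pow_mul, hpowN, one_pow]
  have hrange_iff : (∃ u : Lˣ, u ^ d = a) ↔ a ^ (N / g) = 1 := by
    constructor
    · rintro ⟨u, rfl⟩; exact hpow u
    · intro h
      have hNgN : N / g ∣ N := Nat.div_dvd_of_dvd hgN
      have hNg0 : 0 < N / g := Nat.div_pos (Nat.le_of_dvd hN0 hgN) hg0
      let F : Lˣ →* Lˣ := powMonoidHom d
      have hker : (F.ker : Set Lˣ) = {u : Lˣ | u ^ g = 1} := by
        ext u
        simp only [SetLike.mem_coe, MonoidHom.mem_ker, Set.mem_setOf_eq]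
        show u ^ d = 1 ↔ u ^ g = 1
        rw [hg, hN, Nat.card_eq_fintype_card, pow_gcd_eq_one, and_iff_left pow_card_eq_one]
      have hcardker : Nat.card F.ker = g := by
        have h3 := card_pow_eq_one_units L hgN hg0
        rw [← hker] at h3
        rwa [← Nat.card_coe_set_eq, SetLike.coe_sort_coe] at h3
      have hrange_le : F.range ≤ rootsOfUnity (N / g) L := by
        rintro x ⟨u, rfl⟩
        rw [mem_rootsOfUnity]
        exact hpow u
      have hcard_range : Nat.card F.range = N / g := by
        have h1 : Nat.card Lˣ = Nat.card (Lˣ ⧸ F.ker) * Nat.card F.ker :=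
          Subgroup.card_eq_card_quotient_mul_card_subgroup F.ker
        have h2 : Nat.card (Lˣ ⧸ F.ker) = Nat.card F.range :=
          Nat.card_congr (QuotientGroup.quotientKerEquivRange F).toEquiv
        rw [h2, hcardker] at h1
        have h4 : g * Nat.card F.range = g * f := by rw [mul_comm g, ← h1, ← hN, hf]
        rw [hNg]
        exact Nat.eq_of_mul_eq_mul_left hg0 h4
      have hcard_roots : Nat.card (rootsOfUnity (N / g) L) = N / g := by
        have hset2 : {u : Lˣ | u ^ (N / g) = 1} = (rootsOfUnity (N / g) L : Set Lˣ) := by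
          ext u; simp [mem_rootsOfUnity]
        have h3 := card_pow_eq_one_units L hNgN hNg0
        rw [hset2] at h3
        rwa [← Nat.card_coe_set_eq, SetLike.coe_sort_coe] at h3
      have heq : F.range = rootsOfUnity (N / g) L :=
        Subgroup.eq_of_le_of_card_ge hrange_le (by rw [hcard_range, hcard_roots])
      have : a ∈ F.range := by
        rw [heq, mem_rootsOfUnity]; exact h
      obtain ⟨u, hu⟩ := this
      exact ⟨u, hu⟩
  split_ifs with h
  · obtain ⟨u₀, hu₀⟩ := hrange_iff.mpr h
    have hset : {u : Lˣ | u ^ d = a} = (· * u₀) '' {v : Lˣ | v ^ d = 1} := by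
      ext u
      simp only [Set.mem_setOf_eq, Set.mem_image]
      constructor
      · intro hu
        refine ⟨u * u₀⁻¹, ?_, by group⟩
        rw [mul_pow, hu, inv_pow, hu₀, mul_inv_cancel]
      · rintro ⟨v, hv, rfl⟩
        rw [mul_pow, hv, one_mul, hu₀]
    rw [hset, Set.ncard_image_of_injective _ (mul_left_injective u₀)]
    have : {v : Lˣ | v ^ d = 1} = {v : Lˣ | v ^ g = 1} := by
      ext v
      simp only [Set.mem_setOf_eq]
      rw [hg, hN, Nat.card_eq_fintype_card, pow_gcd_eq_one, and_iff_left pow_card_eq_one]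
    rw [this]
    exact card_pow_eq_one_units L hgN hg0
  · rw [Set.ncard_eq_zero (Set.toFinite _)]
    rw [Set.eq_empty_iff_forall_notMem]
    intro u hu
    exact h (hrange_iff.mp ⟨u, hu⟩)

/-- For `gcd(s,n) = 1` and `1 ≤ k ≤ n-1`, the polynomial
`a_0 x - x^{q^{sk}}` over `F_{q^n}` (`a_0 ≠ 0`) has exactly `q^k` roots in `F_{q^n}`
iff `k ∣ n` and `N_{q^n/q^k}(a_0) = a_0^{(q^n-1)/(q^k-1)} = 1`. -/
theorem stmt8 (q n k s : ℕ) (hq : IsPrimePow q) (hn : 0 < n) (hs : Nat.gcd s n = 1)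
    (hk1 : 1 ≤ k) (hk2 : k ≤ n - 1)
    (L : Type*) [Field L] [Fintype L] (hL : Fintype.card L = q ^ n)
    (a₀ : L) (ha₀ : a₀ ≠ 0) :
    Set.ncard {x : L | a₀ * x - x ^ q ^ (s * k) = 0} = q ^ k
      ↔ (k ∣ n ∧ a₀ ^ ((q ^ n - 1) / (q ^ k - 1)) = 1) := by
  classical
  have hq2 : 2 ≤ q := hq.two_le
  have hn2 : 2 ≤ n := by omega
  have hs1 : 1 ≤ s := by
    rcases Nat.eq_zero_or_pos s with rfl | h
    · simp [Nat.gcd_zero_left] at hs; omega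
    · exact h
  have hsk1 : 1 ≤ s * k := Nat.one_le_iff_ne_zero.mpr (by positivity)
  set m := q ^ (s * k) with hm
  have hm2 : 2 ≤ m := by
    calc 2 ≤ q := hq2
    _ = q ^ 1 := (pow_one q).symm
    _ ≤ q ^ (s * k) := Nat.pow_le_pow_right (by omega) hsk1
  -- the cardinality of the unit group
  have hNL : Nat.card Lˣ = q ^ n - 1 := by
    rw [Nat.card_eq_fintype_card, Fintype.card_units, hL]
  have hqn2 : 2 ≤ q ^ n := by
    calc 2 ≤ q := hq2
    _ = q ^ 1 := (pow_one q).symm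
    _ ≤ q ^ n := Nat.pow_le_pow_right (by omega) (by omega)
  -- decompose the solution set
  set T := {x : L | x ^ (m - 1) = a₀} with hT
  have hTne : ∀ x ∈ T, x ≠ 0 := by
    intro x hx h0
    rw [hT, Set.mem_setOf_eq, h0, zero_pow (by omega : m - 1 ≠ 0)] at hx
    exact ha₀ hx.symm
  have hSdecomp : {x : L | a₀ * x - x ^ q ^ (s * k) = 0} = insert (0 : L) T := by
    ext x
    simp only [Set.mem_setOf_eq, Set.mem_insert_iff, hT, sub_eq_zero, ← hm]
    rcases eq_or_ne x 0 with rfl | hx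
    · simp [zero_pow (by omega : m ≠ 0)]
    · simp only [hx, false_or]
      constructor
      · intro h
        apply mul_right_cancel₀ hx
        rw [h, ← pow_succ, Nat.sub_add_cancel (by omega : 1 ≤ m)]
      · intro h
        rw [← h, ← pow_succ, Nat.sub_add_cancel (by omega : 1 ≤ m)]
  -- count T via units
  set au : Lˣ := Units.mk0 a₀ ha₀ with hau
  have hTimage : T = (Units.val : Lˣ → L) '' {u : Lˣ | u ^ (m - 1) = au} := by
    ext x
    simp only [Set.mem_image, Set.mem_setOf_eq, hT]
    constructor
    · intro hx
      have hx0 : x ≠ 0 := hTne x hx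
      refine ⟨Units.mk0 x hx0, ?_, rfl⟩
      ext
      push_cast
      exact hx
    · rintro ⟨u, hu, rfl⟩
      have := congrArg (Units.val) hu
      push_cast at this
      simpa [hau] using this
  have hd0 : 0 < m - 1 := by omega
  have hcount := count_pow L (m - 1) hd0 au
  -- identify the gcd
  set G := Nat.gcd k n with hG
  have hgcd : Nat.gcd (m - 1) (Nat.card Lˣ) = q ^ G - 1 := by
    rw [hNL, hm, mersenne_gcd q hq2, Nat.Coprime.gcd_mul_left_cancel k hs]
  have hGn : G ∣ n := Nat.gcd_dvd_right _ _
  have hG1 : 1 ≤ G := Nat.gcd_pos_of_pos_left n hk1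
  have hqG2 : 2 ≤ q ^ G := by
    calc 2 ≤ q := hq2
    _ = q ^ 1 := (pow_one q).symm
    _ ≤ q ^ G := Nat.pow_le_pow_right (by omega) hG1
  -- relate unit powers to field powers
  have hcast : ∀ e : ℕ, (au ^ e = 1) ↔ a₀ ^ e = 1 := by
    intro e
    rw [Units.ext_iff]
    push_cast
    simp [hau]
  -- assemble
  have hTcard : T.ncard = if a₀ ^ ((q ^ n - 1) / (q ^ G - 1)) = 1 then q ^ G - 1 else 0 := by
    rw [hTimage, Set.ncard_image_of_injective _ Units.val_injective, hcount, hgcd, hNL]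
    by_cases hc : a₀ ^ ((q ^ n - 1) / (q ^ G - 1)) = 1
    · rw [if_pos hc, if_pos ((hcast _).mpr hc)]
    · rw [if_neg hc, if_neg (fun h => hc ((hcast _).mp h))]
  have h0T : (0 : L) ∉ T := fun h => hTne 0 h rfl
  have hScard : Set.ncard {x : L | a₀ * x - x ^ q ^ (s * k) = 0}
      = 1 + (if a₀ ^ ((q ^ n - 1) / (q ^ G - 1)) = 1 then q ^ G - 1 else 0) := by
    rw [hSdecomp, Set.ncard_insert_of_notMem h0T (Set.toFinite T), hTcard]
    omega
  rw [hScard]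
  have hGk : G = k ↔ k ∣ n := by
    constructor
    · intro h; rw [← h, hG]; exact Nat.gcd_dvd_right k n
    · intro h; rw [hG]; exact Nat.gcd_eq_left h
  have hqk2 : 2 ≤ q ^ k := by
    calc 2 ≤ q := hq2
    _ = q ^ 1 := (pow_one q).symm
    _ ≤ q ^ k := Nat.pow_le_pow_right (by omega) hk1
  constructor
  · intro h
    by_cases hc : a₀ ^ ((q ^ n - 1) / (q ^ G - 1)) = 1
    · rw [if_pos hc] at h
      have hGk' : q ^ G = q ^ k := by omega
      have hGkeq : G = k := Nat.pow_right_injective hq2 hGk'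
      exact ⟨hGk.mp hGkeq, by rw [← hGkeq]; exact hc⟩
    · rw [if_neg hc] at h
      omega
  · rintro ⟨hdvd, hnorm⟩
    have hGkeq : G = k := hGk.mpr hdvd
    rw [hGkeq, if_pos hnorm]
    omega
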